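/- Let a < b be coprime positive integers and let D be an a,b-Dyck path. Then: (1) for every lattice point P at the bottom of a north step of D, the laser diagonal d(P) is an a,b-admissible diagonal of P_{b+1}; (2) distinct such lattice points P ≠ Q yield distinct diagonals d(P) ≠ d(Q); and (3) for any two such points P and Q, the diagonals d(P) and d(Q) do not cross. Consequently, F(D) is a face of Âss(a,b), so every face of Ass(a,b) is a face of Âss(a,b). -/
import Mathlib


/-- `S(a,b) = { ⌊ib/a⌋ : i = 1, …, a-1 }`. -/
def Sab (a b : ℕ) : Finset ℕ := (Finset.Icc 1 (a - 1)).image (fun i => i * b / a)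

/-- A diagonal of the polygon `P_{b+1}` with boundary points `0, 1, …, b`:
a pair `i < j` with `j - i ≥ 2` and `(i, j) ≠ (0, b)`. -/
def IsDiagonal (b i j : ℕ) : Prop := i + 2 ≤ j ∧ j ≤ b ∧ ¬(i = 0 ∧ j = b)

/-- A diagonal `ij` is `a,b`-admissible if it separates `j - i - 1` and `b - j + i`
boundary points, both of which lie in `S(a,b)`. -/
def Admissible (a b : ℕ) (d : ℕ × ℕ) : Prop :=
  IsDiagonal b d.1 d.2 ∧ d.2 - d.1 - 1 ∈ Sab a b ∧ b - d.2 + d.1 ∈ Sab a b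

/-- Two diagonals `ij` and `km` cross if `i < k < j < m` or `k < i < m < j`. -/
def Crosses (d d' : ℕ × ℕ) : Prop :=
  (d.1 < d'.1 ∧ d'.1 < d.2 ∧ d.2 < d'.2) ∨ (d'.1 < d.1 ∧ d.1 < d'.2 ∧ d'.2 < d.2)

/-- An `a,b`-Dyck path: a north/east lattice path from `(0,0)` to `(b,a)` staying weakly
above `y = (a/b) x`.  It is encoded by the height `h u` of its unique east step over the
column interval `[u, u+1]`, for `0 ≤ u < b`; we normalize `h u = a` for `u ≥ b`. -/
structure DyckPath (a b : ℕ) where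
  h : ℕ → ℕ
  mono : Monotone h
  norm : ∀ x, b ≤ x → h x = a
  above : ∀ x, x < b → a * (x + 1) ≤ b * h x

/-- The lattice point `(x, y)` lies on `D` at the bottom of a north step of `D`. -/
def BottomNorth (a b : ℕ) (D : DyckPath a b) (x y : ℕ) : Prop :=
  x ≤ b ∧ (if x = 0 then 0 else D.h (x - 1)) ≤ y ∧ y < D.h x

/-- The laser of slope `a/b` fired northeast from the lattice point `(x, y)` of `D` first
hits `D` in the interior of the east step whose right endpoint has `x`-coordinate `k`;
the associated laser diagonal is `d(P) = (x, k)`.  The laser passes strictly below the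
right endpoint of every earlier east step and strictly above the one it hits. -/
def IsLaserDiag (a b : ℕ) (D : DyckPath a b) (x y k : ℕ) : Prop :=
  x < k ∧ k ≤ b ∧ b * D.h (k - 1) < b * y + a * (k - x) ∧
    ∀ u, x ≤ u → u + 1 < k → b * y + a * (u + 1 - x) < b * D.h u

/-- `F(D)`: the set of laser diagonals `d(P)` of the lattice points `P ≠ (0,0)` at the
bottoms of north steps of `D`. -/
def FD (a b : ℕ) (D : DyckPath a b) : Set (ℕ × ℕ) :=
  { d | ∃ y, BottomNorth a b D d.1 y ∧ (d.1, y) ≠ (0, 0) ∧ IsLaserDiag a b D d.1 y d.2 }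

/-- A finite abstract simplicial complex on the ground set `E`: a downward closed
collection of finite subsets of `E`. -/
structure AbsCplx (E : Type*) where
  faces : Set (Finset E)
  down : ∀ F ∈ faces, ∀ F' ⊆ F, F' ∈ faces

/-- The rational associahedron `Âss(a,b)`: faces are the sets of pairwise noncrossing
`a,b`-admissible diagonals. -/
def hatAss (a b : ℕ) : AbsCplx (ℕ × ℕ) where
  faces := { F | (∀ d ∈ F, Admissible a b d) ∧ ∀ d ∈ F, ∀ d' ∈ F, ¬Crosses d d' }
  down := fun F hF F' hsub =>
    ⟨fun d hd => hF.1 d (hsub hd), fun d hd d' hd' => hF.2 d (hsub hd) d' (hsub hd')⟩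

/-- The rational associahedron `Ass(a,b)`: faces are the subsets of the sets `F(D)`,
as `D` ranges over `a,b`-Dyck paths. -/
def Ass (a b : ℕ) : AbsCplx (ℕ × ℕ) where
  faces := { F | ∃ D : DyckPath a b, ∀ d ∈ F, d ∈ FD a b D }
  down := fun F hF F' hsub =>
    let ⟨D, hD⟩ := hF
    ⟨D, fun d hd => hD d (hsub hd)⟩

section Aux

/-- `⌊mb/a⌋` is strictly monotone in `m` when `a < b`. -/
lemma div_strict_aux (a b : ℕ) (ha : 0 < a) (hab : a < b) (m m' : ℕ) (h : m < m') :
    m * b / a < m' * b / a := by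
  have h1 : m * b + a ≤ m' * b := by
    have h2 : (m + 1) * b ≤ m' * b := Nat.mul_le_mul_right _ h
    rw [Nat.add_mul, one_mul] at h2
    linarith
  calc m * b / a < m * b / a + 1 := Nat.lt_succ_self _
    _ = (m * b + a) / a := (Nat.add_div_right _ ha).symm
    _ ≤ m' * b / a := Nat.div_le_div_right h1

/-- The complementary-floor identity `⌊(a-m)b/a⌋ = b - 1 - ⌊mb/a⌋` for `0 < m < a`. -/
lemma floor_compl (a b : ℕ) (ha : 0 < a) (hab : a < b) (hcop : Nat.Coprime a b)
    (m : ℕ) (hm1 : 1 ≤ m) (hm2 : m ≤ a - 1) :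
    (a - m) * b / a = b - 1 - m * b / a := by
  have hb : 0 < b := lt_trans ha hab
  set q := m * b / a with hq
  set r := m * b % a with hr
  have h1 : a * q + r = m * b := Nat.div_add_mod _ _
  have hra : r < a := Nat.mod_lt _ ha
  have hr0 : r ≠ 0 := by
    intro h0
    have hdvd : a ∣ m * b := Nat.dvd_of_mod_eq_zero (hr ▸ h0)
    have h3 : a ∣ m := Nat.Coprime.dvd_of_dvd_mul_right hcop hdvd
    have := Nat.le_of_dvd (by omega) h3
    omega
  have hqb : q < b := by
    rw [hq]
    refine (Nat.div_lt_iff_lt_mul ha).2 ?_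
    calc m * b = b * m := mul_comm _ _
      _ < b * a := (Nat.mul_lt_mul_left hb).2 (by omega)
      _ = b * a := rfl
  have hma : m ≤ a := by omega
  have h1z : (a : ℤ) * q + r = m * b := by exact_mod_cast h1
  have hkey : (a - m) * b = a * (b - 1 - q) + (a - r) := by
    zify [hma, le_of_lt hra, show q ≤ b - 1 by omega, show 1 ≤ b by omega]
    linear_combination h1z
  calc (a - m) * b / a = (a * (b - 1 - q) + (a - r)) / a := by rw [hkey]
    _ = (b - 1 - q) + (a - r) / a := Nat.mul_add_div ha _ _
    _ = b - 1 - q := by rw [Nat.div_eq_of_lt (by omega), Nat.add_zero]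

lemma h_le_a (a b : ℕ) (D : DyckPath a b) (u : ℕ) : D.h u ≤ a := by
  calc D.h u ≤ D.h (max u b) := D.mono (le_max_left _ _)
    _ = a := D.norm _ (le_max_right _ _)

/-- Key computation: the laser from `(x,y)` rising `m = h(k-1) - y` lands so that
`k - x - 1 = ⌊mb/a⌋`, with `1 ≤ m ≤ a - 1`. -/
lemma key_lemma (a b : ℕ) (ha : 0 < a) (hab : a < b) (D : DyckPath a b)
    (x y k : ℕ) (hB : BottomNorth a b D x y) (hne : (x, y) ≠ (0, 0))
    (hL : IsLaserDiag a b D x y k) :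
    ∃ m, 1 ≤ m ∧ m ≤ a - 1 ∧ y + m = D.h (k - 1) ∧ x + 2 ≤ k ∧
      k - x - 1 = m * b / a := by
  obtain ⟨hxb, hy1, hy2⟩ := hB
  obtain ⟨hxk, hkb, hhit, hmiss⟩ := hL
  have hb : 0 < b := lt_trans ha hab
  have hy : 1 ≤ y := by
    rcases Nat.eq_zero_or_pos x with hx0 | hx0
    · subst hx0
      rcases Nat.eq_zero_or_pos y with h0 | h0
      · exact absurd (by rw [h0]) hne
      · exact h0
    · have h0 : 1 ≤ D.h 0 := by
        have h1 := D.above 0 hb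
        rcases Nat.eq_zero_or_pos (D.h 0) with h2 | h2
        · rw [h2, Nat.mul_zero] at h1; omega
        · exact h2
      have h3 : D.h 0 ≤ D.h (x - 1) := D.mono (Nat.zero_le _)
      rw [if_neg (by omega)] at hy1
      omega
  have hxk1 : x ≤ k - 1 := by omega
  have hyk : y < D.h (k - 1) := lt_of_lt_of_le hy2 (D.mono hxk1)
  refine ⟨D.h (k - 1) - y, by omega, ?_, by omega, ?_, ?_⟩
  · have := h_le_a a b D (k - 1)
    omega
  · -- x + 2 ≤ k
    by_contra hc
    have hk1 : k = x + 1 := by omega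
    have h5 : k - 1 = x := by omega
    rw [h5, hk1] at hhit
    have h6 : x + 1 - x = 1 := by omega
    rw [h6, mul_one] at hhit
    have h7 : b * (y + 1) ≤ b * D.h x := Nat.mul_le_mul_left _ hy2
    rw [Nat.mul_add, Nat.mul_one] at h7
    linarith
  · -- k - x - 1 = m * b / a
    have hk2 : x + 2 ≤ k := by
      by_contra hc
      have hk1 : k = x + 1 := by omega
      have h5 : k - 1 = x := by omega
      rw [h5, hk1] at hhit
      have h6 : x + 1 - x = 1 := by omega
      rw [h6, mul_one] at hhit
      have h7 : b * (y + 1) ≤ b * D.h x := Nat.mul_le_mul_left _ hy2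
      rw [Nat.mul_add, Nat.mul_one] at h7
      linarith
    set m := D.h (k - 1) - y with hmdef
    have hm : y + m = D.h (k - 1) := by omega
    -- upper bound: b*m < a*(k-x)
    have hup : b * m < a * (k - x) := by
      have h8 : b * y + b * m = b * D.h (k - 1) := by rw [← Nat.mul_add, hm]
      have := hhit
      omega
    -- lower bound: a*(k-x-1) < b*m
    have hlo : a * (k - x - 1) < b * m := by
      have h9 := hmiss (k - 2) (by omega) (by omega)
      have h10 : k - 2 + 1 - x = k - x - 1 := by omega
      rw [h10] at h9
      have h11 : D.h (k - 2) ≤ D.h (k - 1) := D.mono (by omega)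
      have h12 : b * D.h (k - 2) ≤ b * D.h (k - 1) := Nat.mul_le_mul_left _ h11
      have h8 : b * y + b * m = b * D.h (k - 1) := by rw [← Nat.mul_add, hm]
      omega
    have hle : k - x - 1 ≤ m * b / a :=
      (Nat.le_div_iff_mul_le ha).2 (by linarith [hlo])
    have hlt : m * b / a < k - x :=
      (Nat.div_lt_iff_lt_mul ha).2 (by linarith [hup])
    omega

end Aux

lemma laser_admissible (a b : ℕ) (ha : 0 < a) (hab : a < b) (hcop : Nat.Coprime a b)
    (D : DyckPath a b) (x y k : ℕ) (hB : BottomNorth a b D x y)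
    (hne : (x, y) ≠ (0, 0)) (hL : IsLaserDiag a b D x y k) :
    Admissible a b (x, k) := by
  obtain ⟨m, hm1, hm2, hm, hk2, hq⟩ := key_lemma a b ha hab D x y k hB hne hL
  have hkb : k ≤ b := hL.2.1
  have hb : 0 < b := lt_trans ha hab
  refine ⟨⟨hk2, hkb, ?_⟩, ?_, ?_⟩
  · rintro ⟨rfl, hkB⟩
    have hkB' : k = b := hkB
    rw [hkB'] at hq
    have hq' : b - 1 = m * b / a := by simpa using hq
    have h1 : (b - 1) * a ≤ m * b := (Nat.le_div_iff_mul_le ha).1 (le_of_eq hq')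
    have h2 : m * b ≤ (a - 1) * b := Nat.mul_le_mul_right _ hm2
    have h3 : (b - 1) * a ≤ (a - 1) * b := le_trans h1 h2
    have h4 : (a - 1) * b < (b - 1) * a := by
      zify [show 1 ≤ a by omega, show 1 ≤ b by omega]
      nlinarith
    omega
  · simp only [Admissible, Sab, Finset.mem_image]
    exact ⟨m, Finset.mem_Icc.2 ⟨hm1, hm2⟩, hq.symm⟩
  · have hfc := floor_compl a b ha hab hcop m hm1 hm2
    simp only [Admissible, Sab, Finset.mem_image]
    refine ⟨a - m, Finset.mem_Icc.2 ⟨by omega, by omega⟩, ?_⟩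
    rw [hfc, ← hq]
    omega

lemma nocross_half (a b : ℕ) (D : DyckPath a b) (x y k x' y' k' : ℕ)
    (hL : IsLaserDiag a b D x y k) (hB' : BottomNorth a b D x' y')
    (hL' : IsLaserDiag a b D x' y' k')
    (h1 : x < x') (h2 : x' < k) (h3 : k < k') : False := by
  obtain ⟨_, hy1', _⟩ := hB'
  obtain ⟨hxk, hkb, hhit, hmiss⟩ := hL
  obtain ⟨_, _, _, hmiss'⟩ := hL'
  have e1 : b * y + a * (x' - x) < b * D.h (x' - 1) := by
    have h4 := hmiss (x' - 1) (by omega) (by omega)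
    have h5 : x' - 1 + 1 - x = x' - x := by omega
    rwa [h5] at h4
  have e2 : D.h (x' - 1) ≤ y' := by rwa [if_neg (by omega)] at hy1'
  have e3 : b * y' + a * (k - x') < b * D.h (k - 1) := by
    have h4 := hmiss' (k - 1) (by omega) (by omega)
    have h5 : k - 1 + 1 - x' = k - x' := by omega
    rwa [h5] at h4
  have e4 : b * D.h (x' - 1) ≤ b * y' := Nat.mul_le_mul_left _ e2
  have e5 : a * (x' - x) + a * (k - x') = a * (k - x) := by
    rw [← Nat.mul_add]
    congr 1
    omega
  linarith [hhit]

lemma laser_nocross (a b : ℕ) (D : DyckPath a b) (x y k x' y' k' : ℕ)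
    (hB : BottomNorth a b D x y) (hL : IsLaserDiag a b D x y k)
    (hB' : BottomNorth a b D x' y') (hL' : IsLaserDiag a b D x' y' k') :
    ¬Crosses (x, k) (x', k') := by
  rintro (⟨h1, h2, h3⟩ | ⟨h1, h2, h3⟩)
  · exact nocross_half a b D x y k x' y' k' hL hB' hL' h1 h2 h3
  · exact nocross_half a b D x' y' k' x y k hL' hB hL h1 h2 h3

lemma laser_inj (a b : ℕ) (ha : 0 < a) (hab : a < b) (D : DyckPath a b)
    (x y k x' y' k' : ℕ) (hB : BottomNorth a b D x y) (hne : (x, y) ≠ (0, 0))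
    (hL : IsLaserDiag a b D x y k) (hB' : BottomNorth a b D x' y')
    (hne' : (x', y') ≠ (0, 0)) (hL' : IsLaserDiag a b D x' y' k')
    (hPQ : (x, y) ≠ (x', y')) : (x, k) ≠ (x', k') := by
  intro hEq
  have hx : x = x' := congrArg Prod.fst hEq
  have hk : k = k' := congrArg Prod.snd hEq
  subst hx; subst hk
  obtain ⟨m, hm1, hm2, hm, hk2, hq⟩ := key_lemma a b ha hab D x y k hB hne hL
  obtain ⟨m', hm1', hm2', hm', hk2', hq'⟩ := key_lemma a b ha hab D x y' k hB' hne' hL'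
  have hmm : m = m' := by
    rcases Nat.lt_trichotomy m m' with h | h | h
    · have := div_strict_aux a b ha hab m m' h; omega
    · exact h
    · have := div_strict_aux a b ha hab m' m h; omega
  have : y = y' := by omega
  exact hPQ (by rw [this])

/-- For any `a,b`-Dyck path `D`: (1) every laser diagonal of `D` is `a,b`-admissible;
(2) distinct lattice points at bottoms of north steps of `D` have distinct laser
diagonals; (3) any two laser diagonals of `D` do not cross.  Consequently every finite
subset of `F(D)` is a face of `Âss(a,b)`, so every face of `Ass(a,b)` is a face of
`Âss(a,b)`. -/
theorem laser_diagonals_admissible_distinct_noncrossing (a b : ℕ) (ha : 0 < a)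
    (hab : a < b) (hcop : Nat.Coprime a b) (D : DyckPath a b) :
    (∀ x y k, BottomNorth a b D x y → (x, y) ≠ (0, 0) → IsLaserDiag a b D x y k →
      Admissible a b (x, k)) ∧
    (∀ x y k x' y' k', BottomNorth a b D x y → (x, y) ≠ (0, 0) →
      IsLaserDiag a b D x y k → BottomNorth a b D x' y' → (x', y') ≠ (0, 0) →
      IsLaserDiag a b D x' y' k' → (x, y) ≠ (x', y') → (x, k) ≠ (x', k')) ∧
    (∀ x y k x' y' k', BottomNorth a b D x y → (x, y) ≠ (0, 0) →
      IsLaserDiag a b D x y k → BottomNorth a b D x' y' → (x', y') ≠ (0, 0) →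
      IsLaserDiag a b D x' y' k' → ¬Crosses (x, k) (x', k')) ∧
    (∀ G : Finset (ℕ × ℕ), (∀ d ∈ G, d ∈ FD a b D) → G ∈ (hatAss a b).faces) ∧
    (Ass a b).faces ⊆ (hatAss a b).faces := by
  have part4 : ∀ (D' : DyckPath a b) (G : Finset (ℕ × ℕ)),
      (∀ d ∈ G, d ∈ FD a b D') → G ∈ (hatAss a b).faces := by
    intro D' G hG
    constructor
    · intro d hd
      obtain ⟨y, hB, hne, hL⟩ := hG d hd
      exact laser_admissible a b ha hab hcop D' d.1 y d.2 hB hne hL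
    · intro d hd d' hd'
      obtain ⟨y, hB, hne, hL⟩ := hG d hd
      obtain ⟨y', hB', hne', hL'⟩ := hG d' hd'
      exact laser_nocross a b D' d.1 y d.2 d'.1 y' d'.2 hB hL hB' hL'
  refine ⟨?_, ?_, ?_, part4 D, ?_⟩
  · intro x y k hB hne hL
    exact laser_admissible a b ha hab hcop D x y k hB hne hL
  · intro x y k x' y' k' hB hne hL hB' hne' hL' hPQ
    exact laser_inj a b ha hab D x y k x' y' k' hB hne hL hB' hne' hL' hPQ
  · intro x y k x' y' k' hB hne hL hB' hne' hL'
    exact laser_nocross a b D x y k x' y' k' hB hL hB' hL'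
  · rintro F ⟨D', hD'⟩
    exact part4 D' F hD'
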